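/- Every regular tetrahedron with vertices in ℤ³ can be completed to a cube with all eight vertices in ℤ³: there exist four additional points in ℤ³ such that the eight points are the vertices of a cube and the tetrahedron's vertices are four of them (no two adjacent along an edge of the cube). -/

import Mathlib

open Matrix

/-- Casting a vector of integers to a point of `ℝ³` (with the Euclidean structure). -/
noncomputable def intVec (v : Fin 3 → ℤ) : EuclideanSpace ℝ (Fin 3) :=
  (WithLp.equiv 2 (Fin 3 → ℝ)).symm fun i => (v i : ℝ)

private lemma emod2_sq' (x : ℤ) : x^2 % 4 = x % 2 := by
  rcases Int.even_or_odd x with ⟨p, rfl⟩ | ⟨p, rfl⟩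
  · have h : (p+p)^2 = 4*(p*p) := by ring
    rw [h]; generalize p*p = t; omega
  · have h : (2*p+1)^2 = 4*(p*p+p)+1 := by ring
    rw [h]; generalize p*p+p = t; omega

private lemma sumsq' (x0 x1 x2 m : ℤ) (h : x0^2+x1^2+x2^2 = 2*m) :
    x0 % 2 + x1 % 2 + x2 % 2 = 2 * (m % 2) := by
  have e0 := emod2_sq' x0
  have e1 := emod2_sq' x1
  have e2 := emod2_sq' x2
  have h4 : (x0^2+x1^2+x2^2) % 4 = (2*m) % 4 := by rw [h]
  rw [Int.add_emod, Int.add_emod (x0^2)] at h4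
  generalize x0^2 = s0 at e0 h4
  generalize x1^2 = s1 at e1 h4
  generalize x2^2 = s2 at e2 h4
  omega

private lemma dotpar' (x0 x1 x2 y0 y1 y2 m : ℤ) (h : x0*y0+x1*y1+x2*y2 = m) :
    ((x0%2)*(y0%2) + (x1%2)*(y1%2) + (x2%2)*(y2%2)) % 2 = m % 2 := by
  subst h
  conv_rhs => rw [Int.add_emod, Int.add_emod (x0*y0), Int.mul_emod x0, Int.mul_emod x1,
    Int.mul_emod x2]
  conv_lhs => rw [Int.add_emod, Int.add_emod ((x0%2)*(y0%2))]

private lemma parkey' (pa0 pa1 pa2 pb0 pb1 pb2 pc0 pc1 pc2 m : ℤ)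
    (ra0 : pa0 = 0 ∨ pa0 = 1) (ra1 : pa1 = 0 ∨ pa1 = 1) (ra2 : pa2 = 0 ∨ pa2 = 1)
    (rb0 : pb0 = 0 ∨ pb0 = 1) (rb1 : pb1 = 0 ∨ pb1 = 1) (rb2 : pb2 = 0 ∨ pb2 = 1)
    (rc0 : pc0 = 0 ∨ pc0 = 1) (rc1 : pc1 = 0 ∨ pc1 = 1) (rc2 : pc2 = 0 ∨ pc2 = 1)
    (hA : pa0+pa1+pa2 = 2*(m%2)) (hB : pb0+pb1+pb2 = 2*(m%2)) (hC : pc0+pc1+pc2 = 2*(m%2))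
    (hAB : (pa0*pb0+pa1*pb1+pa2*pb2) % 2 = m % 2)
    (hAC : (pa0*pc0+pa1*pc1+pa2*pc2) % 2 = m % 2)
    (hBC : (pb0*pc0+pb1*pc1+pb2*pc2) % 2 = m % 2) :
    (pa0+pb0+pc0) % 2 = 0 ∧ (pa1+pb1+pc1) % 2 = 0 ∧ (pa2+pb2+pc2) % 2 = 0 := by
  rcases ra0 with rfl|rfl <;> rcases ra1 with rfl|rfl <;> rcases ra2 with rfl|rfl <;>
  rcases rb0 with rfl|rfl <;> rcases rb1 with rfl|rfl <;> rcases rb2 with rfl|rfl <;>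
  rcases rc0 with rfl|rfl <;> rcases rc1 with rfl|rfl <;> rcases rc2 with rfl|rfl <;>
  omega

private lemma dist_sq_eq' (v w : Fin 3 → ℤ) :
    dist (intVec v) (intVec w) ^ 2 =
      (((v 0 - w 0)^2 + (v 1 - w 1)^2 + (v 2 - w 2)^2 : ℤ) : ℝ) := by
  rw [EuclideanSpace.dist_eq, Real.sq_sqrt (by positivity)]
  simp [intVec, Fin.sum_univ_three, Real.dist_eq, sq_abs, WithLp.equiv_symm_apply, PiLp.toLp_apply]

set_option maxHeartbeats 2000000 in
/-- Every regular tetrahedron with vertices in `ℤ³` can be completed to a cube with all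
eight vertices in `ℤ³`: there is a cube (base vertex `v ∈ ℤ³` and pairwise orthogonal
nonzero integer edge vectors `u₁, u₂, u₃` of equal norm) whose even-parity corners
`v, v+u₁+u₂, v+u₁+u₃, v+u₂+u₃` (no two adjacent along an edge) are exactly the vertices
of the tetrahedron. -/
theorem tetrahedron_completes_to_cube (O A B C : Fin 3 → ℤ)
    (hOA : O ≠ A) (hOB : O ≠ B) (hOC : O ≠ C) (hAB : A ≠ B) (hAC : A ≠ C) (hBC : B ≠ C)
    (h1 : dist (intVec O) (intVec A) = dist (intVec O) (intVec B))
    (h2 : dist (intVec O) (intVec B) = dist (intVec O) (intVec C))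
    (h3 : dist (intVec O) (intVec C) = dist (intVec A) (intVec B))
    (h4 : dist (intVec A) (intVec B) = dist (intVec A) (intVec C))
    (h5 : dist (intVec A) (intVec C) = dist (intVec B) (intVec C)) :
    ∃ v u₁ u₂ u₃ : Fin 3 → ℤ,
      u₁ ⬝ᵥ u₂ = 0 ∧ u₁ ⬝ᵥ u₃ = 0 ∧ u₂ ⬝ᵥ u₃ = 0 ∧
      u₁ ⬝ᵥ u₁ = u₂ ⬝ᵥ u₂ ∧ u₂ ⬝ᵥ u₂ = u₃ ⬝ᵥ u₃ ∧ u₁ ≠ 0 ∧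
      O = v ∧ A = v + u₁ + u₂ ∧ B = v + u₁ + u₃ ∧ C = v + u₂ + u₃ := by
  have key : ∀ v w x y : Fin 3 → ℤ, dist (intVec v) (intVec w) = dist (intVec x) (intVec y) →
      (v 0 - w 0)^2 + (v 1 - w 1)^2 + (v 2 - w 2)^2
        = (x 0 - y 0)^2 + (x 1 - y 1)^2 + (x 2 - y 2)^2 := by
    intro v w x y h
    have h2 := congrArg (·^2) h
    simp only [dist_sq_eq'] at h2
    exact_mod_cast h2
  have hq1 := key _ _ _ _ h1
  have hq2 := key _ _ _ _ h2
  have hq3 := key _ _ _ _ h3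
  have hq4 := key _ _ _ _ h4
  have hq5 := key _ _ _ _ h5
  clear key h1 h2 h3 h4 h5 hOA hOC hAB hAC hBC
  -- the common dot product m
  obtain ⟨m, habm, haa, hbb, hcc, hacm, hbcm⟩ :
      ∃ m : ℤ,
        (A 0-O 0)*(B 0-O 0)+(A 1-O 1)*(B 1-O 1)+(A 2-O 2)*(B 2-O 2) = m ∧
        (A 0-O 0)^2+(A 1-O 1)^2+(A 2-O 2)^2 = 2*m ∧
        (B 0-O 0)^2+(B 1-O 1)^2+(B 2-O 2)^2 = 2*m ∧
        (C 0-O 0)^2+(C 1-O 1)^2+(C 2-O 2)^2 = 2*m ∧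
        (A 0-O 0)*(C 0-O 0)+(A 1-O 1)*(C 1-O 1)+(A 2-O 2)*(C 2-O 2) = m ∧
        (B 0-O 0)*(C 0-O 0)+(B 1-O 1)*(C 1-O 1)+(B 2-O 2)*(C 2-O 2) = m := by
    refine ⟨_, rfl, ?_, ?_, ?_, ?_, ?_⟩
    · linear_combination -hq2 - hq3
    · linear_combination -hq1 - hq2 - hq3
    · linear_combination -hq1 - 2*hq2 - hq3
    · have hac2 : 2*((A 0-O 0)*(C 0-O 0)+(A 1-O 1)*(C 1-O 1)+(A 2-O 2)*(C 2-O 2))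
          = (A 0-O 0)^2+(A 1-O 1)^2+(A 2-O 2)^2 := by
        linear_combination hq3 + hq4
      have hab2 : 2*((A 0-O 0)*(B 0-O 0)+(A 1-O 1)*(B 1-O 1)+(A 2-O 2)*(B 2-O 2))
          = (A 0-O 0)^2+(A 1-O 1)^2+(A 2-O 2)^2 := by
        linear_combination hq2 + hq3
      linarith
    · have hbc2 : 2*((B 0-O 0)*(C 0-O 0)+(B 1-O 1)*(C 1-O 1)+(B 2-O 2)*(C 2-O 2))
          = (A 0-O 0)^2+(A 1-O 1)^2+(A 2-O 2)^2 := by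
        linear_combination -hq1 + hq3 + hq4 + hq5
      have hab2 : 2*((A 0-O 0)*(B 0-O 0)+(A 1-O 1)*(B 1-O 1)+(A 2-O 2)*(B 2-O 2))
          = (A 0-O 0)^2+(A 1-O 1)^2+(A 2-O 2)^2 := by
        linear_combination hq2 + hq3
      linarith
  clear hq1 hq2 hq3 hq4 hq5
  -- m is positive
  have hmpos : 0 < m := by
    have hOB' : ¬(B 0 - O 0 = 0 ∧ B 1 - O 1 = 0 ∧ B 2 - O 2 = 0) := by
      rintro ⟨e0, e1, e2⟩
      apply hOB
      funext i
      fin_cases i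
      · show O 0 = B 0; omega
      · show O 1 = B 1; omega
      · show O 2 = B 2; omega
    have h01 : ∀ x : ℤ, x ≠ 0 → 1 ≤ x^2 := by
      intro x hx
      rcases lt_or_gt_of_ne hx with h | h <;> nlinarith
    have s0 := sq_nonneg (B 0 - O 0)
    have s1 := sq_nonneg (B 1 - O 1)
    have s2 := sq_nonneg (B 2 - O 2)
    have key2 : 1 ≤ (B 0-O 0)^2 + (B 1-O 1)^2 + (B 2-O 2)^2 := by
      rcases not_and_or.mp hOB' with h | h
      · linarith [h01 _ h]
      · rcases not_and_or.mp h with h | h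
        · linarith [h01 _ h]
        · linarith [h01 _ h]
    have : 1 ≤ 2*m := by linarith
    omega
  -- parity: each coordinate sum of the three edge vectors is even
  have pA := sumsq' (A 0-O 0) (A 1-O 1) (A 2-O 2) m haa
  have pB := sumsq' (B 0-O 0) (B 1-O 1) (B 2-O 2) m hbb
  have pC := sumsq' (C 0-O 0) (C 1-O 1) (C 2-O 2) m hcc
  have pAB := dotpar' _ _ _ _ _ _ m habm
  have pAC := dotpar' _ _ _ _ _ _ m hacm
  have pBC := dotpar' _ _ _ _ _ _ m hbcm
  have pk := parkey' _ _ _ _ _ _ _ _ _ m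
    (by omega) (by omega) (by omega) (by omega) (by omega) (by omega)
    (by omega) (by omega) (by omega) pA pB pC pAB pAC pBC
  obtain ⟨pk0, pk1, pk2⟩ := pk
  -- the center-related integer vector k with a+b+c = 2k
  obtain ⟨k, hk⟩ : ∃ k : Fin 3 → ℤ,
      ∀ i, (A i - O i) + (B i - O i) + (C i - O i) = 2 * k i := by
    refine ⟨fun i => ((A i - O i) + (B i - O i) + (C i - O i)) / 2, fun i => ?_⟩
    fin_cases i
    · show (A 0 - O 0) + (B 0 - O 0) + (C 0 - O 0)
        = 2 * (((A 0 - O 0) + (B 0 - O 0) + (C 0 - O 0)) / 2)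
      omega
    · show (A 1 - O 1) + (B 1 - O 1) + (C 1 - O 1)
        = 2 * (((A 1 - O 1) + (B 1 - O 1) + (C 1 - O 1)) / 2)
      omega
    · show (A 2 - O 2) + (B 2 - O 2) + (C 2 - O 2)
        = 2 * (((A 2 - O 2) + (B 2 - O 2) + (C 2 - O 2)) / 2)
      omega
  have hk0 := hk 0
  have hk1 := hk 1
  have hk2 := hk 2
  -- replace A-differences by k, B, C
  have HA0 : A 0 - O 0 = 2*k 0 - (B 0 - O 0) - (C 0 - O 0) := by omega
  have HA1 : A 1 - O 1 = 2*k 1 - (B 1 - O 1) - (C 1 - O 1) := by omega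
  have HA2 : A 2 - O 2 = 2*k 2 - (B 2 - O 2) - (C 2 - O 2) := by omega
  rw [HA0, HA1, HA2] at haa habm hacm
  refine ⟨O, fun i => k i - (C i - O i), fun i => k i - (B i - O i),
    fun i => k i - (A i - O i), ?_, ?_, ?_, ?_, ?_, ?_, rfl, ?_, ?_, ?_⟩
  · simp only [dotProduct, Fin.sum_univ_three]
    have h40 : 4 * ((k 0 - (C 0 - O 0)) * (k 0 - (B 0 - O 0))
        + (k 1 - (C 1 - O 1)) * (k 1 - (B 1 - O 1))
        + (k 2 - (C 2 - O 2)) * (k 2 - (B 2 - O 2))) = 0 := by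
      linear_combination haa - hbb - hcc + 2*hbcm
    linarith
  · simp only [dotProduct, Fin.sum_univ_three]
    have h40 : 4 * ((k 0 - (C 0 - O 0)) * (k 0 - (A 0 - O 0))
        + (k 1 - (C 1 - O 1)) * (k 1 - (A 1 - O 1))
        + (k 2 - (C 2 - O 2)) * (k 2 - (A 2 - O 2))) = 0 := by
      rw [HA0, HA1, HA2]
      linear_combination hbb - haa - hcc + 2*hacm
    rw [HA0, HA1, HA2] at h40 ⊢
    linarith
  · simp only [dotProduct, Fin.sum_univ_three]
    have h40 : 4 * ((k 0 - (B 0 - O 0)) * (k 0 - (2*k 0 - (B 0 - O 0) - (C 0 - O 0)))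
        + (k 1 - (B 1 - O 1)) * (k 1 - (2*k 1 - (B 1 - O 1) - (C 1 - O 1)))
        + (k 2 - (B 2 - O 2)) * (k 2 - (2*k 2 - (B 2 - O 2) - (C 2 - O 2)))) = 0 := by
      linear_combination hcc - haa - hbb + 2*habm
    rw [HA0, HA1, HA2]
    linarith
  · simp only [dotProduct, Fin.sum_univ_three]
    have hu1 : 4 * ((k 0 - (C 0 - O 0)) * (k 0 - (C 0 - O 0))
        + (k 1 - (C 1 - O 1)) * (k 1 - (C 1 - O 1))
        + (k 2 - (C 2 - O 2)) * (k 2 - (C 2 - O 2))) = 4 * m := by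
      linear_combination haa + hbb + hcc + 2*habm - 2*hacm - 2*hbcm
    have hu2 : 4 * ((k 0 - (B 0 - O 0)) * (k 0 - (B 0 - O 0))
        + (k 1 - (B 1 - O 1)) * (k 1 - (B 1 - O 1))
        + (k 2 - (B 2 - O 2)) * (k 2 - (B 2 - O 2))) = 4 * m := by
      linear_combination haa + hbb + hcc + 2*hacm - 2*habm - 2*hbcm
    linarith
  · simp only [dotProduct, Fin.sum_univ_three]
    have hu2 : 4 * ((k 0 - (B 0 - O 0)) * (k 0 - (B 0 - O 0))
        + (k 1 - (B 1 - O 1)) * (k 1 - (B 1 - O 1))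
        + (k 2 - (B 2 - O 2)) * (k 2 - (B 2 - O 2))) = 4 * m := by
      linear_combination haa + hbb + hcc + 2*hacm - 2*habm - 2*hbcm
    have hu3 : 4 * ((k 0 - (2*k 0 - (B 0 - O 0) - (C 0 - O 0))) * (k 0 - (2*k 0 - (B 0 - O 0) - (C 0 - O 0)))
        + (k 1 - (2*k 1 - (B 1 - O 1) - (C 1 - O 1))) * (k 1 - (2*k 1 - (B 1 - O 1) - (C 1 - O 1)))
        + (k 2 - (2*k 2 - (B 2 - O 2) - (C 2 - O 2))) * (k 2 - (2*k 2 - (B 2 - O 2) - (C 2 - O 2)))) = 4 * m := by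
      linear_combination haa + hbb + hcc - 2*habm - 2*hacm + 2*hbcm
    rw [HA0, HA1, HA2]
    linarith
  · -- u₁ ≠ 0
    intro h
    have h0 := congrFun h 0
    have h1' := congrFun h 1
    have h2' := congrFun h 2
    simp only [Pi.zero_apply] at h0 h1' h2'
    have hu1 : 4 * ((k 0 - (C 0 - O 0)) * (k 0 - (C 0 - O 0))
        + (k 1 - (C 1 - O 1)) * (k 1 - (C 1 - O 1))
        + (k 2 - (C 2 - O 2)) * (k 2 - (C 2 - O 2))) = 4 * m := by
      linear_combination haa + hbb + hcc + 2*habm - 2*hacm - 2*hbcm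
    rw [h0, h1', h2'] at hu1
    omega
  · funext i
    show A i = O i + (k i - (C i - O i)) + (k i - (B i - O i))
    have := hk i; omega
  · funext i
    show B i = O i + (k i - (C i - O i)) + (k i - (A i - O i))
    have := hk i; omega
  · funext i
    show C i = O i + (k i - (B i - O i)) + (k i - (A i - O i))
    have := hk i; omega
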